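/- arXiv:1001.4211 — 2 statements merged into one kernel-verified Lean document; each statement's English description precedes it below -/
import Mathlib

section
/- Forward amalgamation is an elementary shift equivalence: let A be an n×n matrix with entries in {0,1} and suppose indices i ≠ j satisfy the forward condition, i.e., the i-th and j-th columns of A are equal (A e_i = A e_j) and the i-th and j-th rows of A have disjoint supports ((e_iᵀA)·(e_jᵀA) = 0). Let X be the n×(n−1) matrix obtained from the identity by deleting the j-th column's corresponding row structure (I with the j-th row replaced by zero, columns reindexed), and Y the (n−1)×n matrix obtained from the identity by inserting e_i as the j-th column. Then with B = Y A X one has (Y)(A X) = B and (A X)(Y) = A, so (AX, Y) is an elementary shift equivalence from A to B. -/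
/-- The `n+1 × n` "insertion" matrix `X`: the identity matrix with a zero
`j`-th row inserted. -/
def amalgX {α : Type*} [CommSemiring α] {n : ℕ} (j : Fin (n + 1)) :
    Matrix (Fin (n + 1)) (Fin n) α :=
  fun r c => if r = j.succAbove c then 1 else 0

/-- The `n × n+1` "deletion" matrix `Y`: the identity matrix (with index `j`
deleted from the columns) whose `j`-th column is `e_i` with its `j`-th entry
removed. -/
def amalgY {α : Type*} [CommSemiring α] {n : ℕ} (i j : Fin (n + 1)) :
    Matrix (Fin n) (Fin (n + 1)) α :=
  fun r c => if c = j.succAbove r ∨ (c = j ∧ j.succAbove r = i) then 1 else 0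

lemma amalgAX {n : ℕ} (A : Matrix (Fin (n + 1)) (Fin (n + 1)) ℝ) (j : Fin (n + 1))
    (r : Fin (n + 1)) (k : Fin n) :
    (A * amalgX (α := ℝ) j : Matrix (Fin (n + 1)) (Fin n) ℝ) r k = A r (j.succAbove k) := by
  simp [Matrix.mul_apply, amalgX]

/-- Forward amalgamation is an elementary shift equivalence: if columns `i`
and `j` of the 0-1 matrix `A` are equal and rows `i` and `j` have disjoint
supports, then with `B = Y * A * X` we have `Y * (A * X) = B` and
`(A * X) * Y = A`. -/
theorem forward_amalgamation_elemSSE {n : ℕ} (A : Matrix (Fin (n + 1)) (Fin (n + 1)) ℝ)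
    (i j : Fin (n + 1)) (hij : i ≠ j)
    (h01 : ∀ r c, A r c = 0 ∨ A r c = 1)
    (hcol : ∀ r, A r i = A r j)
    (hrow : dotProduct (A i) (A j) = 0) :
    amalgY (α := ℝ) i j * (A * amalgX (α := ℝ) j) = amalgY (α := ℝ) i j * A * amalgX (α := ℝ) j ∧
      (A * amalgX (α := ℝ) j) * amalgY (α := ℝ) i j = A := by
  refine ⟨(Matrix.mul_assoc _ _ _).symm, ?_⟩
  ext r c
  simp only [Matrix.mul_apply, amalgAX, amalgY, mul_ite, mul_one, mul_zero]
  by_cases hc : c = j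
  · obtain ⟨k0, hk0⟩ := Fin.exists_succAbove_eq hij
    rw [Finset.sum_eq_single k0]
    · simp [amalgX, hk0, hc, (hcol r).symm]
    · intro k _ hk
      have h1 : c ≠ j.succAbove k := by rw [hc]; exact (Fin.succAbove_ne j k).symm
      have h2 : j.succAbove k ≠ i := fun h => hk (j.succAbove_right_injective (h.trans hk0.symm))
      simp [h1, h2]
    · simp
  · obtain ⟨k0, hk0⟩ := Fin.exists_succAbove_eq hc
    rw [Finset.sum_eq_single k0]
    · simp [amalgX, hk0]
    · intro k _ hk
      have h1 : c ≠ j.succAbove k := fun h => hk (j.succAbove_right_injective (hk0.trans h).symm)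
      simp [h1, hc]
    · simp
end

section
/- Backward amalgamation is an elementary shift equivalence: if indices i ≠ j satisfy the backward condition for the n×n 0-1 matrix A (rows i and j of A are equal: e_iᵀA = e_jᵀA, and columns i and j have disjoint supports: (A e_i)·(A e_j) = 0), then with B = Xᵀ A Yᵀ, the pair (Xᵀ A, Yᵀ) is an elementary shift equivalence from A to B, i.e., (Xᵀ A)(Yᵀ) = B and (Yᵀ)(Xᵀ A) = A. -/
/-- Backward amalgamation is an elementary shift equivalence: if rows `i` and
`j` of the 0-1 matrix `A` are equal and columns `i` and `j` have disjoint
supports, then with `B = Xᵀ * A * Yᵀ` we have `(Xᵀ * A) * Yᵀ = B` and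
`Yᵀ * (Xᵀ * A) = A`. -/
theorem backward_amalgamation_elemSSE {n : ℕ}
    (A : Matrix (Fin (n + 1)) (Fin (n + 1)) ℝ)
    (i j : Fin (n + 1)) (hij : i ≠ j)
    (h01 : ∀ r c, A r c = 0 ∨ A r c = 1)
    (hrow : ∀ c, A i c = A j c)
    (hcol : dotProduct (fun r => A r i) (fun r => A r j) = 0) :
    ((amalgX (α := ℝ) j).transpose * A) * (amalgY (α := ℝ) i j).transpose =
        (amalgX (α := ℝ) j).transpose * A * (amalgY (α := ℝ) i j).transpose ∧
      (amalgY (α := ℝ) i j).transpose * ((amalgX (α := ℝ) j).transpose * A) = A := by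
  refine ⟨rfl, ?_⟩
  have hXA : ∀ (m : Fin n) (c : Fin (n+1)),
      ((amalgX (α := ℝ) j).transpose * A : Matrix (Fin n) (Fin (n+1)) ℝ) m c = A (j.succAbove m) c := by
    intro m c
    rw [Matrix.mul_apply]
    rw [Fintype.sum_eq_single (j.succAbove m)]
    · simp [amalgX, Matrix.transpose]
    · intro k hk
      simp [amalgX, Matrix.transpose, hk]
  ext r c
  rw [Matrix.mul_apply]
  simp only [hXA]
  by_cases hr : r = j
  · obtain ⟨m, hm⟩ := Fin.exists_succAbove_eq hij
    rw [Fintype.sum_eq_single m]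
    · have : A (j.succAbove m) c = A r c := by rw [hm, hrow, hr]
      simp [amalgY, Matrix.transpose, hr, hm, this, (Fin.succAbove_ne j m).symm, hrow c]
    · intro k hk
      have h1 : j ≠ j.succAbove k := (Fin.succAbove_ne j k).symm
      have h2 : j.succAbove k ≠ i := fun h => hk (Fin.succAbove_right_injective (h.trans hm.symm))
      simp [amalgY, Matrix.transpose, hr, h1, h2]
  · obtain ⟨m, hm⟩ := Fin.exists_succAbove_eq hr
    rw [Fintype.sum_eq_single m]
    · simp [amalgY, Matrix.transpose, hm]
    · intro k hk
      have h1 : r ≠ j.succAbove k := fun h =>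
        hk (Fin.succAbove_right_injective ((hm.trans h).symm : j.succAbove k = j.succAbove m))
      simp [amalgY, Matrix.transpose, h1, hr]
end
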